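/- Let F be a finite field with q elements and let k, s, t, d be integers with 1 ≤ k ≤ s ≤ t. Consider the map that sends a pair (A, B) of feature sets with |A| = t, |B| = s and |A △ B| = d to the pair of deterministic vault records (rec_k(A), rec_k(B)) ∈ F^{t−k} × F^{s−k}. The image of this map has cardinality at most q^{min(t+s−2k, t−k+d)}. (This is the counting content of Theorem 3: the entropy loss of a pair of vault records computed from feature sets at set difference d is at most min(t+s−2k, t−k+d)·log q.) -/

import Mathlib

open Polynomial Finset

/-- The characteristic polynomial of a finite subset `A` of a field:
`χ_A(X) = ∏_{a ∈ A} (X - a)`. -/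
noncomputable def charPoly {F : Type*} [Field F] (A : Finset F) : F[X] :=
  ∏ a ∈ A, (X - C a)

/-- The deterministic vault record of a feature set `A` of size `n` with
parameter `k`: the tuple of coefficients of `X^k, …, X^{n−1}` of `χ_A`. -/
noncomputable def vRec {F : Type*} [Field F] (n k : ℕ) (A : Finset F) :
    Fin (n - k) → F :=
  fun j => (charPoly A).coeff (k + (j : ℕ))

lemma charPoly_monic {F : Type*} [Field F] (A : Finset F) : (charPoly A).Monic :=
  monic_prod_of_monic _ _ fun a _ => monic_X_sub_C a

lemma charPoly_natDegree {F : Type*} [Field F] (A : Finset F) :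
    (charPoly A).natDegree = A.card := by
  unfold charPoly
  rw [natDegree_prod _ _ fun a _ => X_sub_C_ne_zero a]
  simp

lemma charPoly_degree {F : Type*} [Field F] (A : Finset F) :
    (charPoly A).degree = (A.card : ℕ) := by
  rw [degree_eq_natDegree (charPoly_monic A).ne_zero, charPoly_natDegree]

lemma charPoly_mul_sdiff {F : Type*} [Field F] [DecidableEq F] (A B : Finset F) :
    charPoly A = charPoly (A ∩ B) * charPoly (A \ B) := by
  unfold charPoly
  conv_lhs => rw [← Finset.sdiff_union_inter A B]
  rw [Finset.prod_union (Finset.disjoint_sdiff_inter A B), mul_comm]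

lemma coeff_eq_of_vRec_eq {F : Type*} [Field F] {n k : ℕ} {A A' : Finset F}
    (hA : A.card = n) (hA' : A'.card = n) (hv : vRec n k A = vRec n k A') :
    ∀ j, k ≤ j → (charPoly A).coeff j = (charPoly A').coeff j := by
  intro j hj
  rcases lt_trichotomy j n with h | h | h
  · have := congrFun hv ⟨j - k, by omega⟩
    simpa [vRec, Nat.add_sub_cancel' hj] using this
  · rw [show j = (charPoly A).natDegree by rw [charPoly_natDegree, hA, h],
      (charPoly_monic A).coeff_natDegree,
      show (charPoly A).natDegree = (charPoly A').natDegree by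
        rw [charPoly_natDegree, charPoly_natDegree, hA, hA'],
      (charPoly_monic A').coeff_natDegree]
  · rw [coeff_eq_zero_of_natDegree_lt (by rw [charPoly_natDegree, hA]; exact h),
      coeff_eq_zero_of_natDegree_lt (by rw [charPoly_natDegree, hA']; exact h)]

lemma key {F : Type*} [Field F] [DecidableEq F] {k : ℕ} {A B A' B' : Finset F}
    (h1 : A \ B = A' \ B') (h2 : B \ A = B' \ A')
    (hd : (B \ A).card ≤ (A \ B).card)
    (hA : ∀ j, k ≤ j → (charPoly A).coeff j = (charPoly A').coeff j) :
    ∀ j, k ≤ j → (charPoly B).coeff j = (charPoly B').coeff j := by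
  intro j hj
  have hBeq : charPoly B = charPoly (A ∩ B) * charPoly (B \ A) := by
    rw [Finset.inter_comm]; exact charPoly_mul_sdiff B A
  have hB'eq : charPoly B' = charPoly (A' ∩ B') * charPoly (B' \ A') := by
    rw [Finset.inter_comm]; exact charPoly_mul_sdiff B' A'
  have hsubA : charPoly A - charPoly A' =
      (charPoly (A ∩ B) - charPoly (A' ∩ B')) * charPoly (A \ B) := by
    rw [charPoly_mul_sdiff A B, charPoly_mul_sdiff A' B', h1, sub_mul]
  have hdegA : (charPoly A - charPoly A').degree < (k : ℕ) := by
    rw [degree_lt_iff_coeff_zero]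
    intro m hm
    rw [coeff_sub, hA m hm, sub_self]
  rw [hsubA, degree_mul] at hdegA
  have hdQR : (charPoly (B \ A)).degree ≤ (charPoly (A \ B)).degree := by
    rw [charPoly_degree, charPoly_degree]
    exact_mod_cast hd
  have hdegB : (charPoly B - charPoly B').degree < (k : ℕ) := by
    have heq : charPoly B - charPoly B' =
        (charPoly (A ∩ B) - charPoly (A' ∩ B')) * charPoly (B \ A) := by
      rw [hBeq, hB'eq, h2, sub_mul]
    rw [heq, degree_mul]
    exact lt_of_le_of_lt (add_le_add le_rfl hdQR) hdegA
  have hz := (degree_lt_iff_coeff_zero _ _).1 hdegB j hj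
  rw [coeff_sub, sub_eq_zero] at hz
  exact hz

open Classical in
noncomputable def recg {F : Type*} [Field F] [DecidableEq F] (t s k : ℕ)
    (v : Fin (t - k) → F) (D1 D2 : Finset F) : Fin (s - k) → F :=
  if h : ∃ AB : Finset F × Finset F, AB.1.card = t ∧ AB.2.card = s ∧
      AB.1 \ AB.2 = D1 ∧ AB.2 \ AB.1 = D2 ∧ v = vRec t k AB.1
  then vRec s k h.choose.2 else 0

lemma recg_spec {F : Type*} [Field F] [DecidableEq F] {t s k : ℕ}
    {A B : Finset F} (hA : A.card = t) (hB : B.card = s)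
    (hd : (B \ A).card ≤ (A \ B).card) :
    recg t s k (vRec t k A) (A \ B) (B \ A) = vRec s k B := by
  have hex : ∃ AB : Finset F × Finset F, AB.1.card = t ∧ AB.2.card = s ∧
      AB.1 \ AB.2 = A \ B ∧ AB.2 \ AB.1 = B \ A ∧ vRec t k A = vRec t k AB.1 :=
    ⟨(A, B), hA, hB, rfl, rfl, rfl⟩
  rw [recg, dif_pos hex]
  obtain ⟨hA', hB', h1, h2, hv⟩ := hex.choose_spec
  have hco := key (A := hex.choose.1) (B := hex.choose.2) (A' := A) (B' := B)
    h1 h2 (by rw [h1, h2]; exact hd) (coeff_eq_of_vRec_eq hA' hA hv.symm)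
  funext j
  simp only [vRec]
  exact hco (k + (j : ℕ)) (Nat.le_add_right _ _)

/-- Counting content of Theorem 3: the image of the map sending a pair `(A, B)`
of feature sets of sizes `t`, `s` with `|A △ B| = d` to the pair of their
deterministic vault records has cardinality at most
`q^{min(t+s−2k, t−k+d)}`. -/
theorem stmt6 {F : Type*} [Field F] [Fintype F] [DecidableEq F]
    (k s t d : ℕ) (hk : 1 ≤ k) (hks : k ≤ s) (hst : s ≤ t) :
    Set.ncard { p : (Fin (t - k) → F) × (Fin (s - k) → F) |
        ∃ A B : Finset F, A.card = t ∧ B.card = s ∧ (symmDiff A B).card = d ∧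
          p.1 = vRec t k A ∧ p.2 = vRec s k B }
      ≤ (Fintype.card F) ^ min (t + s - 2 * k) (t - k + d) := by
  classical
  set S := { p : (Fin (t - k) → F) × (Fin (s - k) → F) |
      ∃ A B : Finset F, A.card = t ∧ B.card = s ∧ (symmDiff A B).card = d ∧
        p.1 = vRec t k A ∧ p.2 = vRec s k B } with hSdef
  have hb1 : S.ncard ≤ Fintype.card F ^ (t + s - 2 * k) := by
    have h1 : S.ncard ≤ (Set.univ : Set ((Fin (t - k) → F) × (Fin (s - k) → F))).ncard :=
      Set.ncard_le_ncard (Set.subset_univ _) Set.finite_univ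
    rw [Set.ncard_univ, Nat.card_eq_fintype_card, Fintype.card_prod, Fintype.card_fun,
      Fintype.card_fun, Fintype.card_fin, Fintype.card_fin, ← pow_add] at h1
    have : t - k + (s - k) = t + s - 2 * k := by omega
    rwa [this] at h1
  have hb2 : S.ncard ≤ Fintype.card F ^ (t - k + d) := by
    rcases S.eq_empty_or_nonempty with hE | hne
    · simp [hE]
    obtain ⟨p0, hp0⟩ := hne
    obtain ⟨A0, B0, hA0, hB0, hd0, -, -⟩ := hp0
    have hsymm : ∀ A B : Finset F, (symmDiff A B).card = (A \ B).card + (B \ A).card := by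
      intro A B
      rw [symmDiff_def, Finset.sup_eq_union,
        Finset.card_union_of_disjoint disjoint_sdiff_sdiff]
    set d1 := (A0 \ B0).card with hd1
    set d2 := (B0 \ A0).card with hd2
    have e1' := Finset.card_sdiff_add_card_inter A0 B0
    have e2' := Finset.card_sdiff_add_card_inter B0 A0
    have e3' := hsymm A0 B0
    have hint' : (B0 ∩ A0).card = (A0 ∩ B0).card := by rw [Finset.inter_comm]
    have hcard : ∀ A B : Finset F, A.card = t → B.card = s → (symmDiff A B).card = d →
        (A \ B).card = d1 ∧ (B \ A).card = d2 := by
      intro A B hA hB hd'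
      have e1 := Finset.card_sdiff_add_card_inter A B
      have e2 := Finset.card_sdiff_add_card_inter B A
      have e3 := hsymm A B
      have hint : (B ∩ A).card = (A ∩ B).card := by rw [Finset.inter_comm]
      omega
    have hd21 : d2 ≤ d1 := by omega
    have hdd : d1 + d2 = d := by omega
    set g : (Fin (t - k) → F) × {D1 : Finset F // D1.card = d1} ×
        {D2 : Finset F // D2.card = d2} → (Fin (t - k) → F) × (Fin (s - k) → F) :=
      fun x => (x.1, recg t s k x.1 x.2.1.1 x.2.2.1) with hg
    have hsub : S ⊆ Set.range g := by
      rintro ⟨v, w⟩ ⟨A, B, hA, hB, hABd, hv, hw⟩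
      obtain ⟨f1, f2⟩ := hcard A B hA hB hABd
      have hv' : v = vRec t k A := hv
      have hw' : w = vRec s k B := hw
      subst hv'; subst hw'
      refine ⟨⟨vRec t k A, ⟨A \ B, f1⟩, ⟨B \ A, f2⟩⟩, ?_⟩
      refine Prod.ext rfl ?_
      show recg t s k (vRec t k A) (A \ B) (B \ A) = vRec s k B
      exact recg_spec hA hB (by omega)
    calc S.ncard ≤ (Set.range g).ncard :=
          Set.ncard_le_ncard hsub (Set.finite_range _)
      _ = (g '' Set.univ).ncard := by rw [Set.image_univ]
      _ ≤ (Set.univ : Set ((Fin (t - k) → F) × {D1 : Finset F // D1.card = d1} ×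
            {D2 : Finset F // D2.card = d2})).ncard := Set.ncard_image_le Set.finite_univ
      _ = Fintype.card F ^ (t - k) *
            ((Fintype.card F).choose d1 * (Fintype.card F).choose d2) := by
          rw [Set.ncard_univ, Nat.card_eq_fintype_card, Fintype.card_prod, Fintype.card_prod,
            Fintype.card_fun, Fintype.card_fin, Fintype.card_finset_len,
            Fintype.card_finset_len]
      _ ≤ Fintype.card F ^ (t - k) * (Fintype.card F ^ d1 * Fintype.card F ^ d2) :=
          Nat.mul_le_mul_left _
            (Nat.mul_le_mul (Nat.choose_le_pow _ _) (Nat.choose_le_pow _ _))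
      _ = Fintype.card F ^ (t - k + d) := by rw [← pow_add, ← pow_add, hdd]
  rcases le_total (t + s - 2 * k) (t - k + d) with h | h
  · rw [min_eq_left h]; exact hb1
  · rw [min_eq_right h]; exact hb2
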